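/- Let u : ℝ → ℝ be differentiable with continuous derivative and 1-periodic (u(x+1) = u(x) for all x). Let Y be the fundamental solution of the Hill equation with potential u' + u² at spectral parameter μ = 0. Then trace(Y(1)) = 2·cosh(∫₀¹ u(x) dx); that is, Δ_mKdV(0, u) = 2cosh([u]), where [u] = ∫₀¹ u dx is the average of u. -/

import Mathlib

open Complex Matrix

/-- `Y` is the fundamental solution of the Hill equation with potential `v` at spectral
parameter `mu`: `Y' = !![0, 1; v - mu, 0] * Y`, `Y 0 = 1`. -/
def IsHillFund (mu : ℂ) (v : ℝ → ℂ) (Y : ℝ → Matrix (Fin 2) (Fin 2) ℂ) : Prop :=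
  Y 0 = 1 ∧ ∀ (x : ℝ) (i j : Fin 2), HasDerivAt (fun t => Y t i j)
    ((!![0, 1; v x - mu, 0] * Y x) i j) x

private lemma eq_at_endpoints (f : ℝ → ℂ) (h : ∀ x, HasDerivAt f 0 x) : f 1 = f 0 :=
  is_const_of_deriv_eq_zero (fun x => (h x).differentiableAt) (fun x => (h x).deriv) 1 0

theorem hill_discriminant_at_zero
    (u : ℝ → ℝ) (hu : ContDiff ℝ 1 u)
    (hper : ∀ x : ℝ, u (x + 1) = u x)
    (Y : ℝ → Matrix (Fin 2) (Fin 2) ℂ)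
    (hY : IsHillFund 0 (fun x => ((deriv u x : ℝ) : ℂ) + ((u x : ℝ) : ℂ) ^ 2) Y) :
    (Y 1).trace = 2 * Complex.cosh ((∫ x in (0:ℝ)..1, u x : ℝ) : ℂ) := by
  obtain ⟨hY0, hYd⟩ := hY
  set v : ℝ → ℂ := fun x => ((deriv u x : ℝ) : ℂ) + ((u x : ℝ) : ℂ) ^ 2 with hv
  -- derivative facts for u
  have hud : Differentiable ℝ u := hu.differentiable one_ne_zero
  have hcu : Continuous fun t : ℝ => ((u t : ℝ) : ℂ) :=
    Complex.continuous_ofReal.comp hu.continuous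
  have huc : ∀ x : ℝ, HasDerivAt (fun t : ℝ => ((u t : ℝ) : ℂ)) ((deriv u x : ℝ) : ℂ) x :=
    fun x => ((hud x).hasDerivAt).ofReal_comp
  -- antiderivative of u
  set U : ℝ → ℂ := fun x => ∫ t in (0:ℝ)..x, ((u t : ℝ) : ℂ) with hUdef
  have hU : ∀ x : ℝ, HasDerivAt U ((u x : ℝ) : ℂ) x :=
    fun x => (hcu.integral_hasStrictDerivAt 0 x).hasDerivAt
  have hUcont : Continuous U := by
    rw [continuous_iff_continuousAt]; exact fun x => (hU x).continuousAt
  set V : ℝ → ℂ := fun x => ∫ t in (0:ℝ)..x, Complex.exp (-U t) * Complex.exp (-U t) with hVdef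
  have hVc : Continuous fun t : ℝ => Complex.exp (-U t) * Complex.exp (-U t) :=
    ((hUcont.neg).cexp).mul ((hUcont.neg).cexp)
  have hV : ∀ x : ℝ, HasDerivAt V (Complex.exp (-U x) * Complex.exp (-U x)) x :=
    fun x => (hVc.integral_hasStrictDerivAt 0 x).hasDerivAt
  -- the two explicit solutions
  set g₁ : ℝ → ℂ := fun x => Complex.exp (U x) with hg1def
  set g₂ : ℝ → ℂ := fun x => Complex.exp (U x) * V x with hg2def
  have hg1 : ∀ x : ℝ, HasDerivAt g₁ ((u x : ℂ) * g₁ x) x := by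
    intro x
    simpa [mul_comm] using (hU x).cexp
  have hexpU : ∀ x : ℝ, Complex.exp (U x) * Complex.exp (-U x) = 1 := by
    intro x; rw [← Complex.exp_add]; simp
  have hg2 : ∀ x : ℝ, HasDerivAt g₂ ((u x : ℂ) * g₂ x + Complex.exp (-U x)) x := by
    intro x
    have := (hg1 x).mul (hV x)
    have h2 : (u x : ℂ) * g₁ x * V x + g₁ x * (Complex.exp (-U x) * Complex.exp (-U x))
        = (u x : ℂ) * g₂ x + Complex.exp (-U x) := by
      have : g₁ x * Complex.exp (-U x) = 1 := hexpU x
      simp only [hg2def]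
      calc (u x : ℂ) * g₁ x * V x + g₁ x * (Complex.exp (-U x) * Complex.exp (-U x))
          = (u x : ℂ) * (g₁ x * V x) + (g₁ x * Complex.exp (-U x)) * Complex.exp (-U x) := by ring
        _ = (u x : ℂ) * (g₁ x * V x) + Complex.exp (-U x) := by rw [this, one_mul]
    exact this.congr_deriv h2
  -- derivative of exp(-U)
  have hgexpneg : ∀ x : ℝ, HasDerivAt (fun t => Complex.exp (-U t))
      (-(u x : ℂ) * Complex.exp (-U x)) x := by
    intro x
    simpa [mul_comm] using ((hU x).neg).cexp
  -- the derivative function of g₂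
  set G : ℝ → ℂ := fun x => (u x : ℂ) * g₂ x + Complex.exp (-U x) with hGdef
  have hG : ∀ x : ℝ, HasDerivAt G (v x * g₂ x) x := by
    intro x
    have h := (((huc x).mul (hg2 x)).add (hgexpneg x))
    have heq : v x * g₂ x = ((deriv u x : ℝ) : ℂ) * g₂ x
        + (u x : ℂ) * ((u x : ℂ) * g₂ x + Complex.exp (-U x))
        + -(u x : ℂ) * Complex.exp (-U x) := by
      simp only [hv]; ring
    rw [heq]; exact h
  -- entry-wise ODE for Y
  have hy0 : ∀ (x : ℝ) (j : Fin 2), HasDerivAt (fun t => Y t 0 j) (Y x 1 j) x := by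
    intro x j
    have := hYd x 0 j
    simpa [Matrix.mul_apply, Fin.sum_univ_two] using this
  have hy1 : ∀ (x : ℝ) (j : Fin 2), HasDerivAt (fun t => Y t 1 j) (v x * Y x 0 j) x := by
    intro x j
    have := hYd x 1 j
    simpa [Matrix.mul_apply, Fin.sum_univ_two] using this
  -- the two conserved quantities, for each column j
  have hc1 : ∀ j : Fin 2, (fun x => G x * Y x 0 j - g₂ x * Y x 1 j) 1
      = (fun x => G x * Y x 0 j - g₂ x * Y x 1 j) 0 := by
    intro j
    refine eq_at_endpoints (fun x => G x * Y x 0 j - g₂ x * Y x 1 j) fun x => ?_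
    have h := ((hG x).mul (hy0 x j)).sub ((hg2 x).mul (hy1 x j))
    have : v x * g₂ x * Y x 0 j + G x * Y x 1 j
        - (((u x : ℂ) * g₂ x + Complex.exp (-U x)) * Y x 1 j + g₂ x * (v x * Y x 0 j)) = 0 := by
      simp only [hGdef]; ring
    exact h.congr_deriv this
  have hc2 : ∀ j : Fin 2, (fun x => g₁ x * Y x 1 j - (u x : ℂ) * g₁ x * Y x 0 j) 1
      = (fun x => g₁ x * Y x 1 j - (u x : ℂ) * g₁ x * Y x 0 j) 0 := by
    intro j
    refine eq_at_endpoints (fun x => g₁ x * Y x 1 j - (u x : ℂ) * g₁ x * Y x 0 j) fun x => ?_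
    have hug : HasDerivAt (fun t => (u t : ℂ) * g₁ t)
        (((deriv u x : ℝ) : ℂ) * g₁ x + (u x : ℂ) * ((u x : ℂ) * g₁ x)) x := (huc x).mul (hg1 x)
    have h := ((hg1 x).mul (hy1 x j)).sub (hug.mul (hy0 x j))
    have : (u x : ℂ) * g₁ x * Y x 1 j + g₁ x * (v x * Y x 0 j)
        - ((((deriv u x : ℝ) : ℂ) * g₁ x + (u x : ℂ) * ((u x : ℂ) * g₁ x)) * Y x 0 j
          + (u x : ℂ) * g₁ x * Y x 1 j) = 0 := by
      simp only [hv]; ring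
    exact h.congr_deriv this
  -- initial values
  have hU0 : U 0 = 0 := by simp [hUdef]
  have hV0 : V 0 = 0 := by simp [hVdef]
  have hg10 : g₁ 0 = 1 := by simp [hg1def, hU0]
  have hg20 : g₂ 0 = 0 := by simp [hg2def, hV0]
  have hG0 : G 0 = 1 := by simp [hGdef, hg20, hU0]
  have hu10 : u 1 = u 0 := by simpa using hper 0
  -- the four equations at x = 1
  have hY0e : ∀ i j : Fin 2, Y 0 i j = if i = j then 1 else 0 := by
    intro i j; rw [hY0]; simp [Matrix.one_apply]
  have hA := hc1 0
  have hB := hc2 0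
  have hC := hc1 1
  have hD := hc2 1
  simp only [hY0e, hg10, hg20, hG0] at hA hB hC hD
  norm_num at hA hB hC hD
  -- Wronskian-type identity
  have hW : Complex.exp (U 1) * Complex.exp (-U 1) = 1 := hexpU 1
  have hcosh : (2 : ℂ) * Complex.cosh ((∫ x in (0:ℝ)..1, u x : ℝ) : ℂ)
      = Complex.exp (U 1) + Complex.exp (-U 1) := by
    have hU1 : U 1 = ((∫ x in (0:ℝ)..1, u x : ℝ) : ℂ) := by
      simp [hUdef, intervalIntegral.integral_ofReal]
    rw [hU1, Complex.cosh]
    ring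
  rw [Matrix.trace_fin_two, hcosh]
  simp only [hGdef, hg1def, hg2def] at hA hB hC hD
  rw [hu10] at hA hB hC hD
  set E := Complex.exp (U 1)
  set E' := Complex.exp (-U 1)
  set s := Complex.exp (U 1) * V 1
  linear_combination E * hA + s * hB + (u 0 : ℂ) * E * hC + ((u 0 : ℂ) * s + E') * hD
    - (Y 1 0 0 + Y 1 1 1) * hW
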